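/- arXiv:1912.06594 — 2 statements merged into one kernel-verified Lean document; each statement's English description precedes it below -/
import Mathlib

section
/- Reduction of Bayesian compound lotteries: if m is a Bayesian BPA on a finite index set L = {1,…,s} with m({j}) = q_j, and for each j, m_j is a Bayesian conditional BPA on O with m_j({O_i}) = p_i^{(j)}, then the BPA m' = (m ⊕ (⊕_j emb_j(m_j)))↓O obtained via conditional embedding, Dempster combination, and marginalization, is Bayesian with m'({O_i}) = Σ_j q_j p_i^{(j)}. -/
/-- A basic probability assignment on a finite set `S`. -/
def IsBPA {S : Type*} [Fintype S] [DecidableEq S] (m : Finset S → ℝ) : Prop :=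
  m ∅ = 0 ∧ (∀ a, 0 ≤ m a) ∧ (∀ a, m a ≤ 1) ∧ ∑ a : Finset S, m a = 1

/-- A BPA is Bayesian if all its focal sets are singletons. -/
def IsBayesian {S : Type*} [Fintype S] [DecidableEq S] (m : Finset S → ℝ) : Prop :=
  ∀ b : Finset S, 0 < m b → ∃ x : S, b = {x}

/-- The embedded focal set `({j} × b) ∪ ((L \ {j}) × O)` of the conditional embedding. -/
def embSet {L O : Type*} [Fintype L] [Fintype O] [DecidableEq L] [DecidableEq O]
    (j : L) (b : Finset O) : Finset (L × O) :=
  ({j} ×ˢ b) ∪ (({j}ᶜ : Finset L) ×ˢ (Finset.univ : Finset O))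

/-- Intersection of one focal set of the (vacuously extended) first-stage BPA with
focal sets of the conditionally embedded second-stage BPAs. -/
def interSet {L O : Type*} [Fintype L] [Fintype O] [DecidableEq L] [DecidableEq O]
    (a : Finset L) (g : L → Finset O) : Finset (L × O) :=
  (a ×ˢ (Finset.univ : Finset O)) ∩ Finset.univ.inf (fun j => embSet j (g j))

/-- Normalization constant of the (multi-way) Dempster combination of the first-stage
BPA `m` with the conditional embeddings of the second-stage BPAs `mc j`. -/
def KfamConst {L O : Type*} [Fintype L] [Fintype O] [DecidableEq L] [DecidableEq O]
    (m : Finset L → ℝ) (mc : L → Finset O → ℝ) : ℝ :=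
  ∑ a : Finset L, ∑ g : L → Finset O,
    if (interSet a g).Nonempty then m a * ∏ j : L, mc j (g j) else 0

/-- Dempster combination of the first-stage BPA `m` (vacuously extended to `L × O`)
with the conditional embeddings of the second-stage BPAs `mc j`. -/
noncomputable def famJoint {L O : Type*} [Fintype L] [Fintype O] [DecidableEq L] [DecidableEq O]
    (m : Finset L → ℝ) (mc : L → Finset O → ℝ) (c : Finset (L × O)) : ℝ :=
  if c = ∅ then 0
  else (KfamConst m mc)⁻¹ *
    ∑ a : Finset L, ∑ g : L → Finset O,
      if interSet a g = c then m a * ∏ j : L, mc j (g j) else 0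

/-- Marginalization of a BPA on `L × O` to `O`. -/
noncomputable def margSnd {L O : Type*} [Fintype L] [Fintype O] [DecidableEq L] [DecidableEq O]
    (m : Finset (L × O) → ℝ) (b : Finset O) : ℝ :=
  ∑ c ∈ Finset.univ.filter (fun c : Finset (L × O) => c.image Prod.snd = b), m c
lemma interSet_singleton {s : ℕ} {O : Type*} [Fintype O] [DecidableEq O]
    (k : Fin s) (f : Fin s → O) :
    interSet {k} (fun j => ({f j} : Finset O)) = {(k, f k)} := by
  ext ⟨l, o⟩
  simp only [interSet, Finset.mem_inter, Finset.mem_product, Finset.mem_singleton,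
    Finset.mem_univ, and_true, true_and, Finset.mem_inf, embSet, Finset.mem_union,
    Finset.mem_compl, Prod.mk.injEq]
  constructor
  · rintro ⟨rfl, h⟩
    rcases h l trivial with ⟨-, h2⟩ | h2
    · exact ⟨rfl, h2⟩
    · simp at h2
  · rintro ⟨rfl, rfl⟩
    refine ⟨rfl, fun j _ => ?_⟩
    by_cases hj : l = j
    · subst hj; left; exact ⟨rfl, rfl⟩
    · right; exact hj

lemma sum_bpa {s : ℕ} (w : Fin s → ℝ) (F : Finset (Fin s) → ℝ) :
    ∑ a : Finset (Fin s), (∑ j, if a = {j} then w j else 0) * F a = ∑ j, w j * F {j} := by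
  simp_rw [Finset.sum_mul, ite_mul, zero_mul]
  rw [Finset.sum_comm]
  refine Finset.sum_congr rfl fun j _ => ?_
  rw [Finset.sum_ite_eq' Finset.univ ({j} : Finset (Fin s)) (fun a => w j * F a)]
  simp

lemma prod_ite_singleton {s : ℕ} {O : Type*} [Fintype O] [DecidableEq O]
    (p : Fin s → O → ℝ) (g : Fin s → Finset O) (f : Fin s → O) :
    ∏ j, (if g j = {f j} then p j (f j) else 0)
      = if g = (fun j => ({f j} : Finset O)) then ∏ j, p j (f j) else 0 := by
  by_cases h : g = fun j => ({f j} : Finset O)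
  · subst h; simp
  · rw [if_neg h]
    obtain ⟨j, hj⟩ := Function.ne_iff.mp h
    exact Finset.prod_eq_zero (Finset.mem_univ j) (if_neg hj)

lemma sum_pi {s : ℕ} {O : Type*} [Fintype O] [DecidableEq O]
    (p : Fin s → O → ℝ) (F : (Fin s → Finset O) → ℝ) :
    ∑ g : Fin s → Finset O, (∏ j, ∑ i, if g j = {i} then p j i else 0) * F g
      = ∑ f : Fin s → O, (∏ j, p j (f j)) * F (fun j => {f j}) := by
  have h1 : ∀ g : Fin s → Finset O, (∏ j, ∑ i, if g j = {i} then p j i else 0)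
      = ∑ f : Fin s → O, if g = (fun j => ({f j} : Finset O)) then ∏ j, p j (f j) else 0 := by
    intro g
    rw [Finset.prod_univ_sum]
    exact Finset.sum_congr rfl fun f _ => prod_ite_singleton p g f
  simp_rw [h1, Finset.sum_mul, ite_mul, zero_mul]
  rw [Finset.sum_comm]
  refine Finset.sum_congr rfl fun f _ => ?_
  rw [Finset.sum_ite_eq' Finset.univ (fun j => ({f j} : Finset O)) (fun g => (∏ j, p j (f j)) * F g)]
  simp

lemma key_sum {s : ℕ} {O : Type*} [Fintype O] [DecidableEq O]
    (q : Fin s → ℝ) (p : Fin s → O → ℝ)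
    (P : Finset (Fin s × O) → Prop) [DecidablePred P] :
    (∑ a : Finset (Fin s), ∑ g : Fin s → Finset O,
      if P (interSet a g) then
        (∑ j, if a = {j} then q j else 0) * ∏ j, (∑ i, if g j = {i} then p j i else 0) else 0)
    = ∑ k : Fin s, ∑ f : Fin s → O,
        if P ({(k, f k)} : Finset (Fin s × O)) then q k * ∏ j, p j (f j) else 0 := by
  have step : ∀ (a : Finset (Fin s)) (g : Fin s → Finset O),
      (if P (interSet a g) then
        (∑ j, if a = {j} then q j else 0) * ∏ j, (∑ i, if g j = {i} then p j i else 0) else 0)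
      = (∑ j, if a = {j} then q j else 0) *
          ((∏ j, ∑ i, if g j = {i} then p j i else 0) * (if P (interSet a g) then 1 else 0)) := by
    intro a g; split_ifs <;> ring
  simp_rw [step, ← Finset.mul_sum]
  rw [sum_bpa q (fun a => ∑ g : Fin s → Finset O,
    (∏ j, ∑ i, if g j = {i} then p j i else 0) * (if P (interSet a g) then 1 else 0))]
  refine Finset.sum_congr rfl fun k _ => ?_
  rw [sum_pi p (fun g => if P (interSet {k} g) then (1:ℝ) else 0), Finset.mul_sum]
  refine Finset.sum_congr rfl fun f _ => ?_
  rw [interSet_singleton]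
  split_ifs <;> ring

lemma Kfam_one {s : ℕ} {O : Type*} [Fintype O] [DecidableEq O]
    (q : Fin s → ℝ) (hq1 : ∑ j, q j = 1)
    (p : Fin s → O → ℝ) (hp1 : ∀ j, ∑ i, p j i = 1) :
    KfamConst (fun a => ∑ j : Fin s, if a = {j} then q j else 0)
      (fun j b => ∑ i : O, if b = {i} then p j i else 0) = 1 := by
  unfold KfamConst
  rw [key_sum q p (fun c => c.Nonempty)]
  simp only [Finset.singleton_nonempty, if_true]
  have hS : ∑ f : Fin s → O, ∏ j, p j (f j) = 1 := by
    rw [← Fintype.piFinset_univ, ← Finset.prod_univ_sum]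
    simp [hp1]
  simp_rw [← Finset.mul_sum, hS, mul_one, hq1]

lemma famJoint_eq {s : ℕ} {O : Type*} [Fintype O] [DecidableEq O]
    (q : Fin s → ℝ) (hq1 : ∑ j, q j = 1)
    (p : Fin s → O → ℝ) (hp1 : ∀ j, ∑ i, p j i = 1) (c : Finset (Fin s × O)) :
    famJoint (fun a => ∑ j : Fin s, if a = {j} then q j else 0)
      (fun j b => ∑ i : O, if b = {i} then p j i else 0) c
    = ∑ k : Fin s, ∑ f : Fin s → O,
        if ({(k, f k)} : Finset (Fin s × O)) = c then q k * ∏ j, p j (f j) else 0 := by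
  unfold famJoint
  by_cases hc : c = ∅
  · subst hc
    simp [Finset.singleton_ne_empty]
  · rw [if_neg hc, Kfam_one q hq1 p hp1, inv_one, one_mul,
      key_sum q p (fun d => d = c)]

lemma margSnd_eq {s : ℕ} {O : Type*} [Fintype O] [DecidableEq O]
    (q : Fin s → ℝ) (hq1 : ∑ j, q j = 1)
    (p : Fin s → O → ℝ) (hp1 : ∀ j, ∑ i, p j i = 1) (b : Finset O) :
    margSnd (famJoint (fun a => ∑ j : Fin s, if a = {j} then q j else 0)
      (fun j b => ∑ i : O, if b = {i} then p j i else 0)) b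
    = ∑ k : Fin s, ∑ f : Fin s → O,
        if ({f k} : Finset O) = b then q k * ∏ j, p j (f j) else 0 := by
  unfold margSnd
  simp_rw [famJoint_eq q hq1 p hp1]
  rw [Finset.sum_comm]
  refine Finset.sum_congr rfl fun k _ => ?_
  rw [Finset.sum_comm]
  refine Finset.sum_congr rfl fun f _ => ?_
  rw [Finset.sum_ite_eq (Finset.univ.filter (fun c : Finset (Fin s × O) => c.image Prod.snd = b))
    ({(k, f k)} : Finset (Fin s × O)) (fun _ => q k * ∏ j, p j (f j))]
  simp [Finset.image_singleton]

lemma sum_pi_fixed {s : ℕ} {O : Type*} [Fintype O] [DecidableEq O]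
    (p : Fin s → O → ℝ) (hp1 : ∀ j, ∑ i, p j i = 1) (k : Fin s) (i : O) :
    ∑ f : Fin s → O, (if f k = i then ∏ j, p j (f j) else 0) = p k i := by
  have h1 : ∀ f : Fin s → O, (if f k = i then ∏ j, p j (f j) else 0)
      = ∏ j, (if j = k then (if f j = i then p k i else 0) else p j (f j)) := by
    intro f
    by_cases h : f k = i
    · rw [if_pos h]
      refine Finset.prod_congr rfl fun j _ => ?_
      by_cases hj : j = k
      · subst hj; simp [h]
      · simp [hj]
    · rw [if_neg h]
      exact (Finset.prod_eq_zero (Finset.mem_univ k) (by simp [h])).symm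
  simp_rw [h1]
  rw [← Fintype.piFinset_univ,
    ← Finset.prod_univ_sum (fun _ => (Finset.univ : Finset O))
      (fun j y => if j = k then (if y = i then p k i else 0) else p j y)]
  rw [Finset.prod_eq_single k (fun j _ hj => by simp [hj, hp1 j]) (by simp)]
  simp

theorem reduction_bayesian_compound {s : ℕ} {O : Type*} [Fintype O] [DecidableEq O]
    (q : Fin s → ℝ) (hq0 : ∀ j, 0 ≤ q j) (hq1 : ∑ j, q j = 1)
    (p : Fin s → O → ℝ) (hp0 : ∀ j i, 0 ≤ p j i) (hp1 : ∀ j, ∑ i, p j i = 1) :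
    let m : Finset (Fin s) → ℝ := fun a => ∑ j : Fin s, if a = {j} then q j else 0
    let mc : Fin s → Finset O → ℝ := fun j b => ∑ i : O, if b = {i} then p j i else 0
    let m' : Finset O → ℝ := margSnd (famJoint m mc)
    IsBayesian m' ∧ ∀ i : O, m' {i} = ∑ j : Fin s, q j * p j i := by
  intro m mc m'
  have hform : ∀ b : Finset O, m' b = ∑ k : Fin s, ∑ f : Fin s → O,
      if ({f k} : Finset O) = b then q k * ∏ j, p j (f j) else 0 :=
    fun b => margSnd_eq q hq1 p hp1 b
  constructor
  · intro b hb
    by_contra hsing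
    push_neg at hsing
    have : m' b = 0 := by
      rw [hform b]
      refine Finset.sum_eq_zero fun k _ => Finset.sum_eq_zero fun f _ => ?_
      exact if_neg fun h => hsing (f k) h.symm
    linarith
  · intro i
    rw [hform {i}]
    simp_rw [Finset.singleton_inj]
    refine Finset.sum_congr rfl fun k _ => ?_
    rw [← sum_pi_fixed p hp1 k i, Finset.mul_sum]
    refine Finset.sum_congr rfl fun f _ => ?_
    split_ifs <;> ring
end

section
/- Reduction of a bf lottery to a reference lottery: let m be a BPA on O with focal sets a₁,…,a_k, and for each i let m_i be a BPA on O₂ = {O₁, O_r} with m_i({O₁}) = u_i, m_i({O_r}) = v_i, m_i(O₂) = w_i. Let m' be the Bayesian BPA on L = {1,…,k} with m'({i}) = m(a_i). Then the BPA (m' ⊕ (⊕_i emb_i(m_i)))↓O₂ equals the BPA m̃ on O₂ given by m̃({O₁}) = Σ_i m(a_i)u_i, m̃({O_r}) = Σ_i m(a_i)v_i, m̃(O₂) = Σ_i m(a_i)w_i. -/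
set_option linter.unusedSectionVars false
section Aux
variable {L O : Type*} [Fintype L] [Fintype O] [DecidableEq L] [DecidableEq O]

lemma mem_interSet (a : Finset L) (g : L → Finset O) (p : L × O) :
    p ∈ interSet a g ↔ p.1 ∈ a ∧ p.2 ∈ g p.1 := by
  constructor
  · intro hmem
    rw [interSet, Finset.mem_inter] at hmem
    obtain ⟨h1, h2⟩ := hmem
    rw [Finset.mem_product] at h1
    refine ⟨h1.1, ?_⟩
    have hm := Finset.mem_inf.mp h2 p.1 (Finset.mem_univ _)
    simp only [embSet, Finset.mem_union, Finset.mem_product, Finset.mem_singleton,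
      Finset.mem_compl] at hm
    rcases hm with ⟨_, h⟩ | ⟨h, _⟩
    · exact h
    · exact absurd trivial h
  · rintro ⟨hp, hg⟩
    rw [interSet, Finset.mem_inter, Finset.mem_product]
    refine ⟨⟨hp, Finset.mem_univ _⟩, Finset.mem_inf.mpr fun j _ => ?_⟩
    simp only [embSet, Finset.mem_union, Finset.mem_product, Finset.mem_singleton,
      Finset.mem_compl]
    by_cases hj : p.1 = j
    · exact Or.inl ⟨hj, hj ▸ hg⟩
    · exact Or.inr ⟨hj, Finset.mem_univ _⟩

lemma interSet_singleton_s14 (i : L) (g : L → Finset O) :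
    interSet {i} g = {i} ×ˢ g i := by
  ext p
  rw [mem_interSet, Finset.mem_product, Finset.mem_singleton]
  constructor
  · rintro ⟨h1, h2⟩; exact ⟨h1, h1 ▸ h2⟩
  · rintro ⟨h1, h2⟩; exact ⟨h1, h1 ▸ h2⟩

lemma sum_pi_s14 (f : L → Finset O → ℝ) :
    ∑ g : L → Finset O, ∏ j, f j (g j) = ∏ j, ∑ b, f j b := by
  rw [Finset.prod_univ_sum (fun _ => Finset.univ) f, Fintype.piFinset_univ]

lemma sum_pi_fix (f : L → Finset O → ℝ) (hf : ∀ j, ∑ b, f j b = 1)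
    (i : L) (b : Finset O) :
    (∑ g : L → Finset O, if g i = b then ∏ j, f j (g j) else 0) = f i b := by
  have key : ∀ g : L → Finset O,
      (if g i = b then ∏ j, f j (g j) else 0)
        = ∏ j, (if g j = b ∨ j ≠ i then f j (g j) else 0) := by
    intro g
    by_cases h : g i = b
    · rw [if_pos h]
      exact Finset.prod_congr rfl fun j _ => by
        by_cases hj : j = i
        · subst hj; rw [if_pos (Or.inl h)]
        · rw [if_pos (Or.inr hj)]
    · rw [if_neg h]
      exact (Finset.prod_eq_zero (Finset.mem_univ i) (by simp [h])).symm
  simp_rw [key]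
  rw [← Fintype.piFinset_univ, ← Finset.prod_univ_sum (fun _ => Finset.univ)
      (fun j x => if x = b ∨ j ≠ i then f j x else 0)]
  rw [Finset.prod_eq_single i]
  · simp [Finset.sum_ite_eq' Finset.univ b (f i)]
  · intro j _ hj
    simp only [hj, ne_eq, not_false_iff, or_true, if_true]
    exact hf j
  · intro h; exact absurd (Finset.mem_univ i) h

end Aux

section Main
variable {L O : Type*} [Fintype L] [Fintype O] [DecidableEq L] [DecidableEq O]

lemma sum_msingle (μ : L → ℝ) :
    ∑ a : Finset L, ∑ i, (if a = {i} then μ i else 0) = ∑ i, μ i := by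
  rw [Finset.sum_comm]
  refine Finset.sum_congr rfl fun i _ => ?_
  rw [Finset.sum_ite_eq' Finset.univ ({i} : Finset L) (fun _ => μ i),
    if_pos (Finset.mem_univ _)]

lemma msingle_empty (μ : L → ℝ) :
    (∑ i, if (∅ : Finset L) = {i} then μ i else 0) = 0 := by
  refine Finset.sum_eq_zero fun i _ => ?_
  rw [if_neg (Ne.symm (Finset.singleton_ne_empty i))]

lemma Kfam_eq_one (μ : L → ℝ) (hμ1 : ∑ i, μ i = 1) (mc : L → Finset O → ℝ)
    (hmc0 : ∀ j, mc j ∅ = 0) (hmc1 : ∀ j, ∑ b, mc j b = 1) :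
    KfamConst (fun a => ∑ i, if a = {i} then μ i else 0) mc = 1 := by
  unfold KfamConst
  have step : ∀ (a : Finset L) (g : L → Finset O),
      (if (interSet a g).Nonempty then
        (∑ i, if a = {i} then μ i else 0) * ∏ j, mc j (g j) else 0)
      = (∑ i, if a = {i} then μ i else 0) * ∏ j, mc j (g j) := by
    intro a g
    split
    · rfl
    · rename_i hne
      by_cases hP : (∏ j, mc j (g j)) = 0
      · rw [hP, mul_zero]
      · have hgj : ∀ j, (g j).Nonempty := by
          intro j
          rw [Finset.nonempty_iff_ne_empty]
          intro h0
          exact hP (Finset.prod_eq_zero (Finset.mem_univ j) (by rw [h0, hmc0 j]))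
        have ha : a = ∅ := by
          by_contra ha
          obtain ⟨l, hl⟩ := Finset.nonempty_iff_ne_empty.mpr ha
          obtain ⟨o, ho⟩ := hgj l
          exact hne ⟨(l, o), (mem_interSet a g (l, o)).mpr ⟨hl, ho⟩⟩
        rw [ha, msingle_empty, zero_mul]
  simp_rw [step, ← Finset.mul_sum, sum_pi_s14]
  have h1 : (∏ j, ∑ b, mc j b) = 1 := by
    rw [Finset.prod_congr rfl (fun j _ => hmc1 j), Finset.prod_const_one]
  simp_rw [h1, mul_one, sum_msingle, hμ1]

lemma image_snd_singleton_product (i : L) (s : Finset O) :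
    (({i} : Finset L) ×ˢ s).image Prod.snd = s := by
  ext o
  simp only [Finset.mem_image, Finset.mem_product, Finset.mem_singleton]
  constructor
  · rintro ⟨p, ⟨_, hp⟩, rfl⟩; exact hp
  · intro ho; exact ⟨(i, o), ⟨rfl, ho⟩, rfl⟩

lemma marg_eq (μ : L → ℝ) (hμ1 : ∑ i, μ i = 1) (mc : L → Finset O → ℝ)
    (hmc0 : ∀ j, mc j ∅ = 0) (hmc1 : ∀ j, ∑ b, mc j b = 1)
    (b : Finset O) (hb : b ≠ ∅) :
    margSnd (famJoint (fun a => ∑ i, if a = {i} then μ i else 0) mc) b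
      = ∑ i, μ i * mc i b := by
  have hK := Kfam_eq_one μ hμ1 mc hmc0 hmc1
  unfold margSnd
  rw [Finset.sum_filter]
  have stepA : ∀ c : Finset (L × O),
      (if c.image Prod.snd = b then
        famJoint (fun a => ∑ i, if a = {i} then μ i else 0) mc c else 0)
      = ∑ a : Finset L, ∑ g : L → Finset O,
          if (c.image Prod.snd = b ∧ interSet a g = c) then
            (∑ i, if a = {i} then μ i else 0) * ∏ j, mc j (g j) else 0 := by
    intro c
    by_cases himg : c.image Prod.snd = b
    · rw [if_pos himg]
      unfold famJoint
      have hc : c ≠ ∅ := by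
        rintro rfl
        rw [Finset.image_empty] at himg
        exact hb himg.symm
      rw [if_neg hc, hK, inv_one, one_mul]
      simp_rw [himg, true_and]
    · rw [if_neg himg]
      symm
      refine Finset.sum_eq_zero fun a _ => Finset.sum_eq_zero fun g _ => ?_
      rw [if_neg (fun h => himg h.1)]
  simp_rw [stepA]
  have swap : (∑ c : Finset (L × O), ∑ a : Finset L, ∑ g : L → Finset O,
        if (c.image Prod.snd = b ∧ interSet a g = c) then
          (∑ i, if a = {i} then μ i else 0) * ∏ j, mc j (g j) else 0)
      = ∑ a : Finset L, ∑ g : L → Finset O, ∑ c : Finset (L × O),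
        if (c.image Prod.snd = b ∧ interSet a g = c) then
          (∑ i, if a = {i} then μ i else 0) * ∏ j, mc j (g j) else 0 := by
    rw [Finset.sum_comm]
    exact Finset.sum_congr rfl fun a _ => Finset.sum_comm
  rw [swap]
  have inner : ∀ (a : Finset L) (g : L → Finset O),
      (∑ c : Finset (L × O),
        if (c.image Prod.snd = b ∧ interSet a g = c) then
          (∑ i, if a = {i} then μ i else 0) * ∏ j, mc j (g j) else 0)
      = if ((interSet a g).image Prod.snd = b) then
          (∑ i, if a = {i} then μ i else 0) * ∏ j, mc j (g j) else 0 := by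
    intro a g
    rw [Finset.sum_eq_single (interSet a g)]
    · simp
    · intro c _ hc
      rw [if_neg (fun h => hc h.2.symm)]
    · intro h; exact absurd (Finset.mem_univ _) h
  simp_rw [inner]
  have pull : ∀ (a : Finset L) (g : L → Finset O),
      (if ((interSet a g).image Prod.snd = b) then
          (∑ i, if a = {i} then μ i else 0) * ∏ j, mc j (g j) else 0)
      = ∑ i, if a = {i} then
          (μ i * if ((interSet a g).image Prod.snd = b) then ∏ j, mc j (g j) else 0)
        else 0 := by
    intro a g
    split
    · rw [Finset.sum_mul]
      refine Finset.sum_congr rfl fun i _ => ?_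
      split <;> simp
    · symm
      refine Finset.sum_eq_zero fun i _ => ?_
      split <;> simp
  simp_rw [pull]
  rw [Finset.sum_comm]
  have outer : ∀ g : L → Finset O, (∑ a : Finset L, ∑ i, if a = {i} then
          (μ i * if ((interSet a g).image Prod.snd = b) then ∏ j, mc j (g j) else 0)
        else 0)
      = ∑ i, (μ i * if (g i = b) then ∏ j, mc j (g j) else 0) := by
    intro g
    rw [Finset.sum_comm]
    refine Finset.sum_congr rfl fun i _ => ?_
    rw [Finset.sum_ite_eq' Finset.univ ({i} : Finset L), if_pos (Finset.mem_univ _),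
      interSet_singleton_s14, image_snd_singleton_product]
  simp_rw [outer]
  rw [Finset.sum_comm]
  refine Finset.sum_congr rfl fun i _ => ?_
  rw [← Finset.mul_sum, Finset.sum_congr rfl fun g _ => rfl, sum_pi_fix mc hmc1 i b]

end Main
/-- Reduction of a bf lottery to an indifferent bf reference lottery (Theorem 2):
`O₂ = {O₁, O_r}` is modeled as `Bool`, with `true = O₁` (best) and `false = O_r` (worst). -/

theorem reduction_to_reference_lottery {k : ℕ}
    (μ : Fin k → ℝ) (hμ0 : ∀ i, 0 ≤ μ i) (hμ1 : ∑ i, μ i = 1)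
    (u v w : Fin k → ℝ) (hu : ∀ i, 0 ≤ u i) (hv : ∀ i, 0 ≤ v i) (hw : ∀ i, 0 ≤ w i)
    (huvw : ∀ i, u i + v i + w i = 1) :
    let m' : Finset (Fin k) → ℝ := fun a => ∑ i : Fin k, if a = {i} then μ i else 0
    let mc : Fin k → Finset Bool → ℝ := fun i b =>
      if b = {true} then u i
      else if b = {false} then v i
      else if b = Finset.univ then w i
      else 0
    let mt : Finset Bool → ℝ := margSnd (famJoint m' mc)
    mt {true} = ∑ i : Fin k, μ i * u i ∧
      mt {false} = ∑ i : Fin k, μ i * v i ∧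
      mt Finset.univ = ∑ i : Fin k, μ i * w i := by
  intro m' mc mt
  set mcf : Fin k → Finset Bool → ℝ := fun i b =>
      if b = {true} then u i
      else if b = {false} then v i
      else if b = Finset.univ then w i
      else 0 with hmcf
  have e0t : (∅ : Finset Bool) ≠ {true} := by decide
  have e0f : (∅ : Finset Bool) ≠ {false} := by decide
  have e0u : (∅ : Finset Bool) ≠ Finset.univ := by decide
  have e0b : (∅ : Finset Bool) ≠ {true, false} := by decide
  have eft : ({false} : Finset Bool) ≠ {true} := by decide
  have etf : ({true} : Finset Bool) ≠ {false} := by decide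
  have etu : ({true} : Finset Bool) ≠ Finset.univ := by decide
  have efu : ({false} : Finset Bool) ≠ Finset.univ := by decide
  have ebt : ({true, false} : Finset Bool) ≠ {true} := by decide
  have ebf : ({true, false} : Finset Bool) ≠ {false} := by decide
  have ebu : ({true, false} : Finset Bool) = Finset.univ := by decide
  have eut : (Finset.univ : Finset Bool) ≠ {true} := by decide
  have euf : (Finset.univ : Finset Bool) ≠ {false} := by decide
  have hmc0 : ∀ j, mcf j ∅ = 0 := by
    intro j
    simp [hmcf, e0t, e0f, e0u, e0b]
  have hmc1 : ∀ j, ∑ b, mcf j b = 1 := by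
    intro j
    rw [show (Finset.univ : Finset (Finset Bool)) = {∅, {true}, {false}, {true, false}}
      from by decide]
    rw [Finset.sum_insert (by decide), Finset.sum_insert (by decide),
      Finset.sum_insert (by decide), Finset.sum_singleton, hmcf]
    simp only [e0t, e0f, e0u, eft, etf, etu, efu, ebt, ebf, ebu, eut, euf, if_true, if_false,
      if_neg, if_pos, ite_true, ite_false, eq_self_iff_true, not_false_iff]
    rw [← huvw j]
    ring
  refine ⟨?_, ?_, ?_⟩
  · show margSnd (famJoint (fun a => ∑ i : Fin k, if a = {i} then μ i else 0) mcf)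
        {true} = ∑ i : Fin k, μ i * u i
    rw [marg_eq μ hμ1 mcf hmc0 hmc1 {true} (by decide)]
    refine Finset.sum_congr rfl fun i _ => ?_
    simp [hmcf]
  · show margSnd (famJoint (fun a => ∑ i : Fin k, if a = {i} then μ i else 0) mcf)
        {false} = ∑ i : Fin k, μ i * v i
    rw [marg_eq μ hμ1 mcf hmc0 hmc1 {false} (by decide)]
    refine Finset.sum_congr rfl fun i _ => ?_
    simp [hmcf, eft]
  · show margSnd (famJoint (fun a => ∑ i : Fin k, if a = {i} then μ i else 0) mcf)
        Finset.univ = ∑ i : Fin k, μ i * w i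
    rw [marg_eq μ hμ1 mcf hmc0 hmc1 Finset.univ (by decide)]
    refine Finset.sum_congr rfl fun i _ => ?_
    simp [hmcf, eut, euf, ebt, ebf]
end
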